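/- Let α > 0, let n be an integer with |n| ≥ 1, and let κ and R satisfy −(r₀² + n²)/(2R²) < κ < α⁻¹ and R > ( 6(1 + n²(2 ln 2 − 1)) / (α⁻¹ − κ) )^{1/2}. Then for every b > 0 there exists t₀ > 0 such that γ_κ(t₀ u₀) = 0, where u₀ is the tent function with parameters a = R/2 and b; in particular the Nehari set M is nonempty. -/

import Mathlib

open MeasureTheory Set Filter

noncomputable section

/-- The Bessel function `J₀`. -/
def besselJ0 (x : ℝ) : ℝ :=
  ∑' m : ℕ, (-1 : ℝ) ^ m * (x / 2) ^ (2 * m) / ((Nat.factorial m : ℝ)) ^ 2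

/-- The smallest positive zero of `J₀` (≈ 2.404826). -/
def besselR0 : ℝ := sInf {x : ℝ | 0 < x ∧ besselJ0 x = 0}

/-- `u` is a classical solution of the `n`-vortex equation with parameters `(α, n, κ, R)`. -/
def IsVortexSol (α : ℝ) (n : ℤ) (κ R : ℝ) (u : ℝ → ℝ) : Prop :=
  ContinuousOn u (Icc 0 R) ∧
  (∀ r ∈ Ioo (0 : ℝ) R, DifferentiableAt ℝ u r ∧ DifferentiableAt ℝ (deriv u) r) ∧
  u 0 = 0 ∧ u R = 0 ∧
  ∀ r ∈ Ioo (0 : ℝ) R,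
    deriv (fun s => s * deriv u s) r - ((n : ℝ) ^ 2 / r) * u r
      + 2 * r * (u r) ^ 3 / (1 + α * (u r) ^ 2) - 2 * κ * r * u r = 0

/-- `u` has finite energy. -/
def FiniteEnergy (α R : ℝ) (u : ℝ → ℝ) : Prop :=
  IntegrableOn
    (fun r => r * (deriv u r) ^ 2 + (u r) ^ 2 / r + r * Real.log (1 + α * (u r) ^ 2))
    (Ioo 0 R)

/-- The energy flux `Q(u) = 2π ∫₀^R r u(r)² dr`. -/
def fluxQ (R : ℝ) (u : ℝ → ℝ) : ℝ := 2 * Real.pi * ∫ r in Ioo (0 : ℝ) R, r * (u r) ^ 2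

/-- The tent function with parameters `a` and `b`. -/
def tent (a b : ℝ) : ℝ → ℝ := fun r => if r ≤ a then (b / a) * r else (b / a) * (2 * a - r)

/-- The action functional `I_κ`. -/
def actI (α : ℝ) (n : ℤ) (κ R : ℝ) (u : ℝ → ℝ) : ℝ :=
  (1 / 2) * ∫ r in Ioo (0 : ℝ) R,
    (r * (deriv u r) ^ 2 + ((n : ℝ) ^ 2 / r) * (u r) ^ 2
      - 2 * (α⁻¹ - κ) * r * (u r) ^ 2 + 2 * (α ^ 2)⁻¹ * r * Real.log (1 + α * (u r) ^ 2))

/-- The action functional `𝓘`. -/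
def actI0 (α : ℝ) (n : ℤ) (R : ℝ) (u : ℝ → ℝ) : ℝ :=
  (1 / 2) * ∫ r in Ioo (0 : ℝ) R,
    (r * (deriv u r) ^ 2 + ((n : ℝ) ^ 2 / r) * (u r) ^ 2
      - 2 * α⁻¹ * r * (u r) ^ 2 + 2 * (α ^ 2)⁻¹ * r * Real.log (1 + α * (u r) ^ 2))

/-- The functional `γ_κ`. -/
def gammaK (α : ℝ) (n : ℤ) (κ R : ℝ) (u : ℝ → ℝ) : ℝ :=
  (1 / 2) * ∫ r in Ioo (0 : ℝ) R,
    (r * (deriv u r) ^ 2 + ((n : ℝ) ^ 2 / r) * (u r) ^ 2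
      - 2 * (α⁻¹ - κ) * r * (u r) ^ 2 + 2 * α⁻¹ * r * (u r) ^ 2 / (1 + α * (u r) ^ 2))

/-- Membership in the class `X`. -/
def MemX (R : ℝ) (u : ℝ → ℝ) : Prop :=
  ContinuousOn u (Icc 0 R) ∧ ContDiffOn ℝ 1 u (Ioo 0 R) ∧ u 0 = 0 ∧ u R = 0 ∧
    IntegrableOn (fun r => r * (deriv u r) ^ 2 + (u r) ^ 2 / r) (Ioo 0 R)

/-- Membership in the class `X`, allowing finitely many exceptional points. -/
def MemX' (R : ℝ) (u : ℝ → ℝ) : Prop :=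
  ContinuousOn u (Icc 0 R) ∧ (∃ S : Finset ℝ, ContDiffOn ℝ 1 u (Ioo 0 R \ ↑S)) ∧
    u 0 = 0 ∧ u R = 0 ∧
    IntegrableOn (fun r => r * (deriv u r) ^ 2 + (u r) ^ 2 / r) (Ioo 0 R)

/-- The admissible class `𝒜`. -/
def Admissible (α R : ℝ) (v : ℝ → ℝ) : Prop :=
  (∃ K : NNReal, LipschitzOnWith K v (Icc 0 R)) ∧ v 0 = 0 ∧ v R = 0 ∧ FiniteEnergy α R v

end


namespace S12


lemma factorial_pos' (m : ℕ) : (0:ℝ) < (Nat.factorial m : ℝ) := by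
  exact_mod_cast Nat.factorial_pos m

lemma summable_aux (y : ℝ) (hy : 0 ≤ y) :
    Summable (fun m : ℕ => y ^ m / ((Nat.factorial m : ℝ)) ^ 2) := by
  refine Summable.of_nonneg_of_le (fun m => by positivity)
    (fun m => ?_) (Real.summable_pow_div_factorial y)
  have h1 : (1:ℝ) ≤ (Nat.factorial m : ℝ) := by exact_mod_cast Nat.one_le_iff_ne_zero.mpr (Nat.factorial_pos m).ne'
  have := factorial_pos' m
  rw [div_le_div_iff₀ (by positivity) (by positivity)]
  have : y ^ m * (Nat.factorial m : ℝ) ≤ y ^ m * ((Nat.factorial m : ℝ))^2 := by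
    apply mul_le_mul_of_nonneg_left _ (by positivity)
    nlinarith
  nlinarith [pow_nonneg hy m]

lemma abs_term (x : ℝ) (m : ℕ) :
    |(-1 : ℝ) ^ m * (x / 2) ^ (2 * m) / ((Nat.factorial m : ℝ)) ^ 2|
      = ((x/2)^2) ^ m / ((Nat.factorial m : ℝ)) ^ 2 := by
  rw [abs_div, abs_mul, abs_pow, abs_pow, abs_neg, abs_one, one_pow, one_mul,
    abs_of_pos (by positivity : (0:ℝ) < ((Nat.factorial m : ℝ))^2), pow_mul, ← abs_pow,
    abs_of_nonneg (by positivity : (0:ℝ) ≤ (x/2)^2)]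


lemma fact_ge (m : ℕ) : 24 * 5 ^ m ≤ Nat.factorial (m+4) := by
  induction m with
  | zero => norm_num [Nat.factorial]
  | succ k ih =>
    calc 24 * 5^(k+1) = 5 * (24 * 5^k) := by ring
    _ ≤ 5 * Nat.factorial (k+4) := Nat.mul_le_mul_left 5 ih
    _ ≤ (k+5) * Nat.factorial (k+4) := Nat.mul_le_mul_right _ (by omega)
    _ = Nat.factorial (k+5) := rfl


lemma summable_term (x : ℝ) :
    Summable (fun m : ℕ => (-1 : ℝ) ^ m * (x / 2) ^ (2 * m) / ((Nat.factorial m : ℝ)) ^ 2) := by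
  apply Summable.of_abs
  have : ∀ m : ℕ, |(-1 : ℝ) ^ m * (x / 2) ^ (2 * m) / ((Nat.factorial m : ℝ)) ^ 2|
      = ((x/2)^2) ^ m / ((Nat.factorial m : ℝ)) ^ 2 := by
    intro m
    rw [abs_div, abs_mul, abs_pow, abs_pow, abs_neg, abs_one, one_pow, one_mul,
      abs_of_pos (by positivity : (0:ℝ) < ((Nat.factorial m : ℝ))^2), pow_mul, ← abs_pow, abs_of_nonneg (by positivity : (0:ℝ) ≤ (x/2)^2)]
  rw [funext this]
  exact summable_aux _ (by positivity)

lemma besselJ0_zero : besselJ0 0 = 1 := by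
  unfold besselJ0
  rw [tsum_eq_single 0]
  · norm_num
  · intro m hm
    have : (2*m) ≠ 0 := by omega
    simp [this, zero_pow this]

lemma besselJ0_continuousOn : ContinuousOn besselJ0 (Icc (0:ℝ) 3) := by
  rw [continuousOn_iff_continuous_restrict]
  have : (Icc (0:ℝ) 3).restrict besselJ0
      = fun x : Icc (0:ℝ) 3 => ∑' m : ℕ, (-1 : ℝ) ^ m * ((x:ℝ) / 2) ^ (2 * m) / ((Nat.factorial m : ℝ)) ^ 2 := rfl
  change Continuous ((Icc (0:ℝ) 3).restrict besselJ0)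
  rw [this]
  apply continuous_tsum (u := fun m : ℕ => (9/4 : ℝ)^m / ((Nat.factorial m : ℝ))^2)
  · intro m; fun_prop
  · exact summable_aux _ (by norm_num)
  · intro m x
    rw [Real.norm_eq_abs, abs_term]
    have hx : ((x:ℝ)/2)^2 ≤ 9/4 := by nlinarith [x.2.1, x.2.2]
    gcongr

lemma besselJ0_three_neg : besselJ0 3 < 0 := by
  have hsum : Summable (fun m : ℕ => (-1 : ℝ) ^ m * ((3:ℝ) / 2) ^ (2 * m) / ((Nat.factorial m : ℝ)) ^ 2) := by
    apply Summable.of_abs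
    simp only [abs_term]
    refine Summable.of_nonneg_of_le (fun m => by positivity) (fun m => ?_) (Real.summable_pow_div_factorial (9/4))
    have h1 : (1:ℝ) ≤ (Nat.factorial m : ℝ) := by
      exact_mod_cast Nat.one_le_iff_ne_zero.mpr (Nat.factorial_pos m).ne'
    have h2 := factorial_pos' m
    have : (((3:ℝ)/2)^2)^m = (9/4:ℝ)^m := by norm_num
    rw [this, div_le_div_iff₀ (by positivity) (by positivity)]
    apply mul_le_mul_of_nonneg_left _ (by positivity)
    nlinarith
  set f : ℕ → ℝ := fun m => (-1 : ℝ) ^ m * ((3:ℝ) / 2) ^ (2 * m) / ((Nat.factorial m : ℝ)) ^ 2 with hf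
  have key : besselJ0 3 = (∑ m ∈ Finset.range 4, f m) + ∑' m : ℕ, f (m + 4) :=
    (Summable.sum_add_tsum_nat_add 4 hsum).symm
  have hhead : (∑ m ∈ Finset.range 4, f m) = -77/256 := by
    simp [hf, Finset.sum_range_succ, Nat.factorial]
    norm_num
  have hg : ∀ m : ℕ, |f (m+4)| ≤ (6561/147456 : ℝ) * (9/100)^m := by
    intro m
    have hfact : (24 * 5^m : ℝ) ≤ (Nat.factorial (m+4) : ℝ) := by exact_mod_cast fact_ge m
    have hfp : (0:ℝ) < (Nat.factorial (m+4) : ℝ) := factorial_pos' _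
    have h5 : (0:ℝ) ≤ 5^m := by positivity
    have h576 : (576:ℝ) * 25^m ≤ ((Nat.factorial (m+4):ℝ))^2 := by
      have h25 : ((5:ℝ)^m)^2 = 25^m := by
        rw [← pow_mul, show (25:ℝ) = 5^2 by norm_num, ← pow_mul, mul_comm]
      nlinarith
    have habs : |f (m+4)| = ((9/4:ℝ))^(m+4) / ((Nat.factorial (m+4):ℝ))^2 := by
      rw [hf]
      simp only []
      rw [abs_term]
      norm_num
    rw [habs]
    calc ((9/4:ℝ))^(m+4) / ((Nat.factorial (m+4):ℝ))^2
        ≤ ((9/4:ℝ))^(m+4) / (576 * 25^m) := by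
          apply div_le_div_of_nonneg_left (by positivity) (by positivity) h576
      _ = (6561/147456 : ℝ) * (9/100)^m := by
          have h : ((9:ℝ)/100) = (9/4)/25 := by norm_num
          have hm : ((9:ℝ)/100)^m = (9/4)^m / 25^m := by rw [h, div_pow]
          have h25 : ((25:ℝ))^m ≠ 0 := by positivity
          rw [pow_add, hm]
          field_simp
          ring
  have hgsum : Summable (fun m : ℕ => (6561/147456 : ℝ) * (9/100)^m) :=
    (summable_geometric_of_lt_one (by norm_num) (by norm_num)).mul_left _
  have habs_sum : Summable (fun m : ℕ => |f (m+4)|) :=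
    Summable.of_nonneg_of_le (fun m => abs_nonneg _) hg hgsum
  have h1 : |∑' m : ℕ, f (m+4)| ≤ ∑' m : ℕ, |f (m+4)| := by
    have := norm_tsum_le_tsum_norm (f := fun m : ℕ => f (m+4)) (by simpa [Real.norm_eq_abs] using habs_sum)
    simpa [Real.norm_eq_abs] using this
  have h2 : ∑' m : ℕ, |f (m+4)| ≤ ∑' m : ℕ, (6561/147456 : ℝ) * (9/100)^m :=
    Summable.tsum_le_tsum hg habs_sum hgsum
  have h3 : ∑' m : ℕ, (6561/147456 : ℝ) * (9/100)^m = (6561/147456 : ℝ) * (1 - 9/100)⁻¹ := by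
    rw [tsum_mul_left, tsum_geometric_of_lt_one (by norm_num) (by norm_num)]
  rw [key, hhead]
  have : |∑' m : ℕ, f (m+4)| ≤ (6561/147456 : ℝ) * (1 - 9/100)⁻¹ := h1.trans (h2.trans_eq h3)
  have habs' := abs_le.mp this
  norm_num at habs' ⊢
  linarith [habs'.2]

lemma besselR0_le_three : besselR0 ≤ 3 := by
  obtain ⟨z, hz, hz0⟩ : ∃ z ∈ Icc (0:ℝ) 3, besselJ0 z = 0 := by
    have h01 : (0:ℝ) ≤ 3 := by norm_num
    have := intermediate_value_Icc' h01 besselJ0_continuousOn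
    have h0 : (0:ℝ) ∈ Icc (besselJ0 3) (besselJ0 0) := by
      rw [besselJ0_zero]
      exact ⟨besselJ0_three_neg.le, by norm_num⟩
    obtain ⟨z, hz, hz'⟩ := this h0
    exact ⟨z, hz, hz'⟩
  have hzpos : 0 < z := by
    rcases hz.1.lt_or_eq with h | h
    · exact h
    · exfalso; rw [← h] at hz0; rw [besselJ0_zero] at hz0; norm_num at hz0
  exact le_trans (csInf_le ⟨0, fun x hx => hx.1.le⟩ ⟨hzpos, hz0⟩) hz.2

lemma besselR0_nonneg : 0 ≤ besselR0 := Real.sInf_nonneg (fun x hx => hx.1.le)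



lemma tent_eq_min (a b r : ℝ) : tent a b r = (b/a) * min r (2*a - r) := by
  unfold tent
  rcases le_or_gt r a with h|h
  · rw [if_pos h, min_eq_left (by linarith)]
  · rw [if_neg (not_le.mpr h), min_eq_right (by linarith)]

lemma tent_continuous (a b : ℝ) : Continuous (tent a b) := by
  have : tent a b = fun r => (b/a) * min r (2*a - r) := funext (tent_eq_min a b)
  rw [this]
  exact continuous_const.mul (continuous_id.min (continuous_const.sub continuous_id))

lemma tent_left {a r : ℝ} (b : ℝ) (h : r ≤ a) : tent a b r = (b/a) * r := if_pos h

lemma tent_right {a r : ℝ} (b : ℝ) (h : a < r) : tent a b r = (b/a) * (2*a - r) :=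
  if_neg (not_le.mpr h)

lemma tent_sq_le {a b r : ℝ} (ha : 0 < a) (hb : 0 ≤ b) (hr : r ∈ Icc 0 (2*a)) :
    (tent a b r)^2 ≤ b^2 := by
  rw [tent_eq_min]
  have h1 : min r (2*a - r) ≤ a := by
    rcases le_total r a with h|h
    · exact (min_le_left _ _).trans h
    · exact (min_le_right _ _).trans (by linarith)
  have h2 : 0 ≤ min r (2*a - r) := le_min hr.1 (by linarith [hr.2])
  have h3 : (b/a) * min r (2*a - r) ≤ b := by
    calc (b/a) * min r (2*a - r) ≤ (b/a) * a := by
          apply mul_le_mul_of_nonneg_left h1 (by positivity)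
      _ = b := by field_simp
  have h4 : 0 ≤ (b/a) * min r (2*a - r) := by positivity
  nlinarith

lemma hasDerivAt_tent_left {a r : ℝ} (b : ℝ) (h : r < a) : HasDerivAt (tent a b) (b/a) r := by
  have he : tent a b =ᶠ[nhds r] (fun x => (b/a) * x) := by
    filter_upwards [Iio_mem_nhds h] with x hx
    exact tent_left b (le_of_lt hx)
  have : HasDerivAt (fun x : ℝ => (b/a) * x) (b/a) r := by
    simpa using (hasDerivAt_id r).const_mul (b/a)
  exact this.congr_of_eventuallyEq he

lemma hasDerivAt_tent_right {a r : ℝ} (b : ℝ) (h : a < r) :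
    HasDerivAt (tent a b) (-(b/a)) r := by
  have he : tent a b =ᶠ[nhds r] (fun x => (b/a) * (2*a - x)) := by
    filter_upwards [Ioi_mem_nhds h] with x hx
    exact tent_right b hx
  have : HasDerivAt (fun x : ℝ => (b/a) * (2*a - x)) (-(b/a)) r := by
    simpa using ((hasDerivAt_const r (2*a)).sub (hasDerivAt_id r)).const_mul (b/a)
  exact this.congr_of_eventuallyEq he

lemma deriv_scaled_left {a r : ℝ} (b t : ℝ) (h : r < a) :
    deriv (fun x => t * tent a b x) r = t * (b/a) :=
  (((hasDerivAt_tent_left b h).const_mul t)).deriv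

lemma deriv_scaled_right {a r : ℝ} (b t : ℝ) (h : a < r) :
    deriv (fun x => t * tent a b x) r = -(t * (b/a)) := by
  have := (((hasDerivAt_tent_right b h).const_mul t)).deriv
  rw [this]; ring

/-! ### splitting helpers -/

lemma eq_restrict_ae {f g : ℝ → ℝ} {l m : ℝ} (h : EqOn f g (Ioo l m)) :
    f =ᶠ[ae (volume.restrict (Ioc l m))] g := by
  have : volume.restrict (Ioc l m) = volume.restrict (Ioo l m) :=
    (Measure.restrict_congr_set Ioo_ae_eq_Ioc).symm
  rw [this]
  exact (ae_restrict_iff' measurableSet_Ioo).mpr (Eventually.of_forall h)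

lemma integrableOn_Ioc_of_eqOn {f g : ℝ → ℝ} {l m : ℝ} (hlm : l ≤ m)
    (h : EqOn f g (Ioo l m)) (hg : IntervalIntegrable g volume l m) :
    IntegrableOn f (Ioc l m) := by
  have hg' : IntegrableOn g (Ioc l m) :=
    (intervalIntegrable_iff_integrableOn_Ioc_of_le hlm).mp hg
  exact hg'.congr (eq_restrict_ae h).symm

lemma integrableOn_split {f g h : ℝ → ℝ} {l m u : ℝ} (hlm : l ≤ m) (hmu : m ≤ u)
    (hfg : EqOn f g (Ioo l m)) (hfh : EqOn f h (Ioo m u))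
    (hg : IntervalIntegrable g volume l m) (hh : IntervalIntegrable h volume m u) :
    IntegrableOn f (Ioo l u) := by
  have h1 := integrableOn_Ioc_of_eqOn hlm hfg hg
  have h2 := integrableOn_Ioc_of_eqOn hmu hfh hh
  refine (h1.union h2).mono_set (fun x hx => ?_)
  rcases le_or_gt x m with h'|h'
  · exact Or.inl ⟨hx.1, h'⟩
  · exact Or.inr ⟨h', hx.2.le⟩

lemma intervalIntegral_congr_Ioo {f g : ℝ → ℝ} {l m : ℝ} (hlm : l ≤ m)
    (h : EqOn f g (Ioo l m)) : ∫ r in l..m, f r = ∫ r in l..m, g r := by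
  rw [intervalIntegral.integral_of_le hlm, intervalIntegral.integral_of_le hlm,
    integral_Ioc_eq_integral_Ioo, integral_Ioc_eq_integral_Ioo,
    setIntegral_congr_fun measurableSet_Ioo h]

lemma integral_Ioo_split {f g h : ℝ → ℝ} {l m u : ℝ} (hlm : l ≤ m) (hmu : m ≤ u)
    (hfg : EqOn f g (Ioo l m)) (hfh : EqOn f h (Ioo m u))
    (hg : IntervalIntegrable g volume l m) (hh : IntervalIntegrable h volume m u) :
    ∫ r in Ioo l u, f r = (∫ r in l..m, g r) + ∫ r in m..u, h r := by
  have hfi1 : IntervalIntegrable f volume l m :=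
    (intervalIntegrable_iff_integrableOn_Ioc_of_le hlm).mpr (integrableOn_Ioc_of_eqOn hlm hfg hg)
  have hfi2 : IntervalIntegrable f volume m u :=
    (intervalIntegrable_iff_integrableOn_Ioc_of_le hmu).mpr (integrableOn_Ioc_of_eqOn hmu hfh hh)
  have hsplit := intervalIntegral.integral_add_adjacent_intervals hfi1 hfi2
  calc ∫ r in Ioo l u, f r = ∫ r in l..u, f r := by
        rw [intervalIntegral.integral_of_le (hlm.trans hmu), integral_Ioc_eq_integral_Ioo]
    _ = (∫ r in l..m, f r) + ∫ r in m..u, f r := hsplit.symm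
    _ = (∫ r in l..m, g r) + ∫ r in m..u, h r := by
        rw [intervalIntegral_congr_Ioo hlm hfg, intervalIntegral_congr_Ioo hmu hfh]


-- assume prior lemmas; for this scratch, axiomize
section Evals
variable {a b : ℝ}

/- E1 -/
lemma deriv_sq_eqOn_left (b t : ℝ) :
    EqOn (fun r => r * (deriv (fun x => t * tent a b x) r)^2)
      (fun r => (t*(b/a))^2 * r) (Ioo 0 a) := by
  intro r hr
  simp only
  rw [deriv_scaled_left b t hr.2]
  ring

lemma deriv_sq_eqOn_right (b t : ℝ) :
    EqOn (fun r => r * (deriv (fun x => t * tent a b x) r)^2)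
      (fun r => (t*(b/a))^2 * r) (Ioo a (2*a)) := by
  intro r hr
  simp only
  rw [deriv_scaled_right b t hr.1]
  ring

lemma intInt_linear (C l u : ℝ) : IntervalIntegrable (fun r => C * r) volume l u :=
  (continuous_const.mul continuous_id).intervalIntegrable l u

lemma intval_linear (C l u : ℝ) : ∫ r in l..u, C * r = C * (u^2 - l^2) / 2 := by
  rw [intervalIntegral.integral_const_mul, integral_id]
  ring

lemma E1 (ha : 0 < a) (t : ℝ) :
    ∫ r in Ioo 0 (2*a), r * (deriv (fun x => t * tent a b x) r)^2 = 2*t^2*b^2 := by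
  rw [integral_Ioo_split (le_of_lt ha) (by linarith) (deriv_sq_eqOn_left b t)
    (deriv_sq_eqOn_right b t) (intInt_linear _ _ _) (intInt_linear _ _ _),
    intval_linear, intval_linear]
  have ha' : a ≠ 0 := ne_of_gt ha
  field_simp
  ring

lemma I1 (ha : 0 < a) (t : ℝ) :
    IntegrableOn (fun r => r * (deriv (fun x => t * tent a b x) r)^2) (Ioo 0 (2*a)) :=
  integrableOn_split (le_of_lt ha) (by linarith) (deriv_sq_eqOn_left b t)
    (deriv_sq_eqOn_right b t) (intInt_linear _ _ _) (intInt_linear _ _ _)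

/- E2 : ∫ (N/r) * (t*tent r)^2 -/
lemma nterm_eqOn_left (N b t : ℝ) :
    EqOn (fun r => (N/r) * (t * tent a b r)^2)
      (fun r => (N * (t*(b/a))^2) * r) (Ioo 0 a) := by
  intro r hr
  simp only
  rw [tent_left b hr.2.le]
  have hr0 : r ≠ 0 := ne_of_gt hr.1
  have hrr : r^2 * r⁻¹ = r := by rw [sq]; field_simp
  field_simp

lemma nterm_eqOn_right (ha : 0 < a) (N b t : ℝ) :
    EqOn (fun r => (N/r) * (t * tent a b r)^2)
      (fun r => (N * (t*(b/a))^2) * (4*a^2 * r⁻¹ - 4*a + r)) (Ioo a (2*a)) := by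
  intro r hr
  simp only
  rw [tent_right b hr.1]
  have h0 : 0 < r := lt_trans ha hr.1
  have : r ≠ 0 := ne_of_gt h0
  field_simp
  ring

lemma intInt_nright (ha : 0 < a) (C : ℝ) :
    IntervalIntegrable (fun r => C * (4*a^2 * r⁻¹ - 4*a + r)) volume a (2*a) := by
  apply ContinuousOn.intervalIntegrable
  have h0 : ∀ x ∈ uIcc a (2*a), x ≠ 0 := by
    intro x hx
    rw [uIcc_of_le (by linarith)] at hx
    exact ne_of_gt (lt_of_lt_of_le ha hx.1)
  apply ContinuousOn.mul continuousOn_const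
  apply ContinuousOn.add (ContinuousOn.sub ?_ continuousOn_const) continuousOn_id
  exact ContinuousOn.mul continuousOn_const (ContinuousOn.inv₀ continuousOn_id h0)

lemma intval_nright (ha : 0 < a) (C : ℝ) :
    ∫ r in a..(2*a), C * (4*a^2 * r⁻¹ - 4*a + r)
      = C * (4*a^2 * Real.log 2 - 4*a^2 + 3*a^2/2) := by
  have h0 : (0:ℝ) ∉ uIcc a (2*a) := by
    rw [uIcc_of_le (by linarith)]
    intro h
    exact absurd h.1 (not_le.mpr ha)
  have hinv : IntervalIntegrable (fun r : ℝ => 4*a^2 * r⁻¹) volume a (2*a) := by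
    apply ContinuousOn.intervalIntegrable
    exact continuousOn_const.mul (ContinuousOn.inv₀ continuousOn_id
      (fun x hx => by rintro rfl; exact h0 hx))
  have hc : IntervalIntegrable (fun _ : ℝ => 4*a) volume a (2*a) := intervalIntegrable_const
  have hid : IntervalIntegrable (fun r : ℝ => r) volume a (2*a) :=
    continuous_id.intervalIntegrable _ _
  rw [intervalIntegral.integral_const_mul]
  rw [intervalIntegral.integral_add (hinv.sub hc) hid, intervalIntegral.integral_sub hinv hc,
    intervalIntegral.integral_const_mul, integral_inv h0,
    intervalIntegral.integral_const, integral_id]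
  have ha' : a ≠ 0 := ne_of_gt ha
  have : (2*a)/a = 2 := by field_simp
  rw [this]
  simp only [smul_eq_mul]
  ring

lemma E2 (ha : 0 < a) (N t : ℝ) :
    ∫ r in Ioo 0 (2*a), (N/r) * (t * tent a b r)^2
      = t^2 * N * b^2 * (4*Real.log 2 - 2) := by
  rw [integral_Ioo_split (le_of_lt ha) (by linarith) (nterm_eqOn_left N b t)
    (nterm_eqOn_right ha N b t) (intInt_linear _ _ _) (intInt_nright ha _),
    intval_linear, intval_nright ha]
  have ha' : a ≠ 0 := ne_of_gt ha
  field_simp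
  ring

lemma I2 (ha : 0 < a) (N t : ℝ) :
    IntegrableOn (fun r => (N/r) * (t * tent a b r)^2) (Ioo 0 (2*a)) :=
  integrableOn_split (le_of_lt ha) (by linarith) (nterm_eqOn_left N b t)
    (nterm_eqOn_right ha N b t) (intInt_linear _ _ _) (intInt_nright ha _)

/- E3 : ∫ r * (t*tent r)^2 -/
lemma rterm_eqOn_left (b t : ℝ) :
    EqOn (fun r => r * (t * tent a b r)^2) (fun r => (t*(b/a))^2 * r^3) (Ioo 0 a) := by
  intro r hr
  simp only
  rw [tent_left b hr.2.le]
  ring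

lemma rterm_eqOn_right (b t : ℝ) :
    EqOn (fun r => r * (t * tent a b r)^2)
      (fun r => (t*(b/a))^2 * (4*a^2*r - 4*a*r^2 + r^3)) (Ioo a (2*a)) := by
  intro r hr
  simp only
  rw [tent_right b hr.1]
  ring

lemma intInt_poly3 (C : ℝ) {l u : ℝ} :
    IntervalIntegrable (fun r => C * r^3) volume l u :=
  (continuous_const.mul (continuous_pow 3)).intervalIntegrable _ _

lemma intInt_polyR (C : ℝ) {l u : ℝ} :
    IntervalIntegrable (fun r => C * (4*a^2*r - 4*a*r^2 + r^3)) volume l u := by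
  apply Continuous.intervalIntegrable
  continuity

lemma intval_poly3 (C l u : ℝ) : ∫ r in l..u, C * r^3 = C * (u^4 - l^4) / 4 := by
  rw [intervalIntegral.integral_const_mul, integral_pow]
  ring

lemma intval_polyR (C : ℝ) :
    ∫ r in a..(2*a), C * (4*a^2*r - 4*a*r^2 + r^3) = C * (5*a^4/12) := by
  have h1 : IntervalIntegrable (fun r : ℝ => 4*a^2*r) volume a (2*a) :=
    (continuous_const.mul continuous_id).intervalIntegrable _ _
  have h2 : IntervalIntegrable (fun r : ℝ => 4*a*r^2) volume a (2*a) :=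
    (continuous_const.mul (continuous_pow 2)).intervalIntegrable _ _
  have h3 : IntervalIntegrable (fun r : ℝ => r^3) volume a (2*a) :=
    (continuous_pow 3).intervalIntegrable _ _
  rw [intervalIntegral.integral_const_mul]
  rw [intervalIntegral.integral_add (h1.sub h2) h3, intervalIntegral.integral_sub h1 h2,
    intervalIntegral.integral_const_mul, intervalIntegral.integral_const_mul,
    integral_id, integral_pow, integral_pow]
  ring

lemma E3 (ha : 0 < a) (t : ℝ) :
    ∫ r in Ioo 0 (2*a), r * (t * tent a b r)^2 = t^2 * b^2 * a^2 * (2/3) := by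
  rw [integral_Ioo_split (le_of_lt ha) (by linarith) (rterm_eqOn_left b t)
    (rterm_eqOn_right b t) (intInt_poly3 _) (intInt_polyR _),
    intval_poly3, intval_polyR]
  have ha' : a ≠ 0 := ne_of_gt ha
  field_simp
  ring

lemma I3 (ha : 0 < a) (t : ℝ) : IntegrableOn (fun r => r * (t * tent a b r)^2) (Ioo 0 (2*a)) :=
  integrableOn_split (le_of_lt ha) (by linarith) (rterm_eqOn_left b t)
    (rterm_eqOn_right b t) (intInt_poly3 _) (intInt_polyR _)

end Evals

section M
variable {α a b : ℝ}

lemma denom_pos (hα : 0 < α) (x : ℝ) : 0 < 1 + α * x^2 := by positivity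

lemma F_continuous (hα : 0 < α) (a b t : ℝ) :
    Continuous (fun r => r * (t * tent a b r)^2 / (1 + α * (t * tent a b r)^2)) := by
  apply Continuous.div
  · exact continuous_id.mul ((continuous_const.mul (tent_continuous a b)).pow 2)
  · exact continuous_const.add (continuous_const.mul ((continuous_const.mul (tent_continuous a b)).pow 2))
  · exact fun x => ne_of_gt (denom_pos hα _)

lemma I4 (hα : 0 < α) (a b t : ℝ) :
    IntegrableOn (fun r => r * (t * tent a b r)^2 / (1 + α * (t * tent a b r)^2))
      (Ioo 0 (2*a)) :=
  ((F_continuous hα a b t).continuousOn.integrableOn_Icc).mono_set Ioo_subset_Icc_self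

lemma frac_le_inv (hα : 0 < α) (x : ℝ) : x^2 / (1 + α * x^2) ≤ α⁻¹ := by
  rw [div_le_iff₀ (denom_pos hα x)]
  have h1 : α⁻¹ * α = 1 := inv_mul_cancel₀ (ne_of_gt hα)
  have h2 : 0 < α⁻¹ := inv_pos.mpr hα
  nlinarith [sq_nonneg x]

lemma M_continuous (hα : 0 < α) (a b : ℝ) :
    Continuous (fun t => ∫ r in Ioo 0 (2*a),
      r * (t * tent a b r)^2 / (1 + α * (t * tent a b r)^2)) := by
  apply continuous_of_dominated (bound := fun r => |r| * α⁻¹)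
  · exact fun t => (F_continuous hα a b t).aestronglyMeasurable
  · intro t
    refine Eventually.of_forall (fun r => ?_)
    rw [Real.norm_eq_abs, mul_div_assoc, abs_mul]
    have h1 : 0 ≤ (t * tent a b r)^2 / (1 + α * (t * tent a b r)^2) := by positivity
    rw [abs_of_nonneg h1]
    exact mul_le_mul_of_nonneg_left (frac_le_inv hα _) (abs_nonneg r)
  · exact ((continuous_abs.mul continuous_const).continuousOn.integrableOn_Icc).mono_set
      Ioo_subset_Icc_self
  · refine Eventually.of_forall (fun r => ?_)
    apply Continuous.div
    · exact continuous_const.mul (((continuous_id.mul continuous_const)).pow 2)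
    · exact continuous_const.add (continuous_const.mul ((continuous_id.mul continuous_const).pow 2))
    · exact fun t => ne_of_gt (denom_pos hα _)

lemma M_le_cubic (hα : 0 < α) (ha : 0 < a) (t : ℝ) :
    (∫ r in Ioo 0 (2*a), r * (t * tent a b r)^2 / (1 + α * (t * tent a b r)^2))
      ≤ t^2 * b^2 * a^2 * (2/3) := by
  rw [← E3 ha t]
  apply setIntegral_mono_on (I4 hα a b t) (I3 ha t) measurableSet_Ioo
  intro r hr
  apply div_le_self (by nlinarith [sq_nonneg (t * tent a b r), hr.1.le]) (by nlinarith [sq_nonneg (t * tent a b r)])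

lemma M_le_const (hα : 0 < α) (ha : 0 < a) (t : ℝ) :
    (∫ r in Ioo 0 (2*a), r * (t * tent a b r)^2 / (1 + α * (t * tent a b r)^2))
      ≤ 2 * a^2 * α⁻¹ := by
  have hle : ∀ r ∈ Ioo (0:ℝ) (2*a),
      r * (t * tent a b r)^2 / (1 + α * (t * tent a b r)^2) ≤ α⁻¹ * r := by
    intro r hr
    rw [mul_div_assoc, mul_comm (α⁻¹) r]
    exact mul_le_mul_of_nonneg_left (frac_le_inv hα _) hr.1.le
  have hint : IntegrableOn (fun r => α⁻¹ * r) (Ioo 0 (2*a)) :=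
    ((continuous_const.mul continuous_id).continuousOn.integrableOn_Icc).mono_set
      Ioo_subset_Icc_self
  calc (∫ r in Ioo 0 (2*a), r * (t * tent a b r)^2 / (1 + α * (t * tent a b r)^2))
      ≤ ∫ r in Ioo 0 (2*a), α⁻¹ * r :=
        setIntegral_mono_on (I4 hα a b t) hint measurableSet_Ioo hle
    _ = 2 * a^2 * α⁻¹ := by
        rw [← integral_Ioc_eq_integral_Ioo, ← intervalIntegral.integral_of_le (by linarith),
          intervalIntegral.integral_const_mul, integral_id]
        ring

lemma M_ge (hα : 0 < α) (ha : 0 < a) (hb : 0 < b) (t : ℝ) :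
    t^2 * b^2 * a^2 * (2/3) * (1 - α * t^2 * b^2)
      ≤ ∫ r in Ioo 0 (2*a), r * (t * tent a b r)^2 / (1 + α * (t * tent a b r)^2) := by
  have hDi : ∀ r ∈ Ioo (0:ℝ) (2*a),
      (1 - α * t^2 * b^2) * (r * (t * tent a b r)^2)
        ≤ r * (t * tent a b r)^2 / (1 + α * (t * tent a b r)^2) := by
    intro r hr
    set s := (t * tent a b r)^2 with hs
    have hs0 : 0 ≤ s := sq_nonneg _
    have hsb : s ≤ t^2 * b^2 := by
      rw [hs, mul_pow]
      have := tent_sq_le ha hb.le (Ioo_subset_Icc_self hr)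
      nlinarith [sq_nonneg t]
    have hD : 0 < 1 + α * s := by positivity
    rw [le_div_iff₀ hD]
    have h1 : 0 ≤ r*s := mul_nonneg hr.1.le hs0
    have h2 : 0 ≤ α*t^2*b^2 - α*s := by nlinarith
    have hp1 : 0 ≤ (r*s) * (α*t^2*b^2 - α*s) := mul_nonneg h1 h2
    have hp2 : 0 ≤ (r*s) * ((α*t^2*b^2) * (α*s)) :=
      mul_nonneg h1 (mul_nonneg (by positivity) (mul_nonneg hα.le hs0))
    nlinarith [hp1, hp2]
  have hint : IntegrableOn (fun r => (1 - α * t^2 * b^2) * (r * (t * tent a b r)^2))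
      (Ioo 0 (2*a)) := (I3 ha t).const_mul _
  calc t^2 * b^2 * a^2 * (2/3) * (1 - α * t^2 * b^2)
      = ∫ r in Ioo 0 (2*a), (1 - α * t^2 * b^2) * (r * (t * tent a b r)^2) := by
        rw [integral_const_mul, E3 ha t]; ring
    _ ≤ _ := setIntegral_mono_on hint (I4 hα a b t) measurableSet_Ioo hDi

end M

lemma gamma_decomp (α : ℝ) (hα : 0 < α) {a : ℝ} (ha : 0 < a) (b : ℝ) (n : ℤ) (κ t : ℝ) :
    gammaK α n κ (2*a) (fun r => t * tent a b r)
      = t^2 * (b^2*(1+(n:ℝ)^2*(2*Real.log 2 - 1)) - (α⁻¹-κ)*b^2*a^2*(2/3))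
        + α⁻¹ * ∫ r in Ioo 0 (2*a),
            r * (t * tent a b r)^2 / (1 + α * (t * tent a b r)^2) := by
  unfold gammaK
  have hfun : (fun r => r * (deriv (fun r => t * tent a b r) r) ^ 2
        + ((n : ℝ) ^ 2 / r) * (t * tent a b r) ^ 2
        - 2 * (α⁻¹ - κ) * r * (t * tent a b r) ^ 2
        + 2 * α⁻¹ * r * (t * tent a b r) ^ 2 / (1 + α * (t * tent a b r) ^ 2))
      = fun r => (r * (deriv (fun x => t * tent a b x) r) ^ 2
        + ((n : ℝ) ^ 2 / r) * (t * tent a b r) ^ 2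
        - (2 * (α⁻¹ - κ)) * (r * (t * tent a b r) ^ 2))
        + (2 * α⁻¹) * (r * (t * tent a b r) ^ 2 / (1 + α * (t * tent a b r) ^ 2)) := by
    funext r
    ring
  rw [hfun]
  have h1 := I1 (b := b) ha t
  have h2 := I2 (b := b) ha ((n:ℝ)^2) t
  have h3 : Integrable (fun r => (2 * (α⁻¹ - κ)) * (r * (t * tent a b r) ^ 2))
      (volume.restrict (Ioo 0 (2*a))) := (I3 (b := b) ha t).const_mul (2 * (α⁻¹ - κ))
  have h4 : Integrable
      (fun r => (2 * α⁻¹) * (r * (t * tent a b r) ^ 2 / (1 + α * (t * tent a b r) ^ 2)))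
      (volume.restrict (Ioo 0 (2*a))) := (I4 (α := α) hα a b t).const_mul (2 * α⁻¹)
  have h12 : Integrable (fun r => r * deriv (fun x => t * tent a b x) r ^ 2
      + (n:ℝ)^2 / r * (t * tent a b r) ^ 2) (volume.restrict (Ioo 0 (2*a))) := h1.add h2
  have hP : Integrable (fun r => r * deriv (fun x => t * tent a b x) r ^ 2
      + (n:ℝ)^2 / r * (t * tent a b r) ^ 2
      - (2 * (α⁻¹ - κ)) * (r * (t * tent a b r) ^ 2))
      (volume.restrict (Ioo 0 (2*a))) := h12.sub h3
  have e0 : ∫ r in Ioo 0 (2*a),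
      ((r * deriv (fun x => t * tent a b x) r ^ 2
        + (n:ℝ)^2 / r * (t * tent a b r) ^ 2
        - (2 * (α⁻¹ - κ)) * (r * (t * tent a b r) ^ 2))
        + (2 * α⁻¹) * (r * (t * tent a b r) ^ 2 / (1 + α * (t * tent a b r) ^ 2)))
      = (∫ r in Ioo 0 (2*a), (r * deriv (fun x => t * tent a b x) r ^ 2
        + (n:ℝ)^2 / r * (t * tent a b r) ^ 2
        - (2 * (α⁻¹ - κ)) * (r * (t * tent a b r) ^ 2)))
      + ∫ r in Ioo 0 (2*a),
          (2 * α⁻¹) * (r * (t * tent a b r) ^ 2 / (1 + α * (t * tent a b r) ^ 2)) :=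
    MeasureTheory.integral_add hP h4
  have e1 : ∫ r in Ioo 0 (2*a),
      (r * deriv (fun x => t * tent a b x) r ^ 2
        + (n:ℝ)^2 / r * (t * tent a b r) ^ 2
        - (2 * (α⁻¹ - κ)) * (r * (t * tent a b r) ^ 2))
      = (∫ r in Ioo 0 (2*a), (r * deriv (fun x => t * tent a b x) r ^ 2
        + (n:ℝ)^2 / r * (t * tent a b r) ^ 2))
      - ∫ r in Ioo 0 (2*a), (2 * (α⁻¹ - κ)) * (r * (t * tent a b r) ^ 2) :=
    MeasureTheory.integral_sub h12 h3
  have e2 : ∫ r in Ioo 0 (2*a),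
      (r * deriv (fun x => t * tent a b x) r ^ 2 + (n:ℝ)^2 / r * (t * tent a b r) ^ 2)
      = (∫ r in Ioo 0 (2*a), r * deriv (fun x => t * tent a b x) r ^ 2)
      + ∫ r in Ioo 0 (2*a), (n:ℝ)^2 / r * (t * tent a b r) ^ 2 :=
    MeasureTheory.integral_add h1 h2
  rw [e0, e1, e2, MeasureTheory.integral_const_mul, MeasureTheory.integral_const_mul,
    E1 ha t, E2 ha ((n:ℝ)^2) t, E3 ha t]
  ring

end S12

set_option maxHeartbeats 1000000 in
/-- the Nehari set is nonempty. -/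
theorem stmt12 (α : ℝ) (hα : 0 < α) (n : ℤ) (hn : 1 ≤ |n|) (R κ : ℝ) (hR0 : 0 < R)
    (hκ1 : -(besselR0 ^ 2 + (n : ℝ) ^ 2) / (2 * R ^ 2) < κ) (hκ2 : κ < α⁻¹)
    (hR : R > Real.sqrt (6 * (1 + (n : ℝ) ^ 2 * (2 * Real.log 2 - 1)) / (α⁻¹ - κ))) :
    (∀ b > (0 : ℝ), ∃ t₀ > (0 : ℝ),
        gammaK α n κ R (fun r => t₀ * tent (R / 2) b r) = 0) ∧
    {u : ℝ → ℝ | MemX' R u ∧ (∃ r ∈ Icc (0 : ℝ) R, u r ≠ 0) ∧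
        gammaK α n κ R u = 0}.Nonempty := by
  classical
  have hln2 : (0.6931471803 : ℝ) < Real.log 2 := Real.log_two_gt_d9
  have hn1 : (1:ℝ) ≤ (n:ℝ)^2 := by
    have h : (1:ℤ) ≤ |n| := hn
    have h2 : (1:ℤ) ≤ n^2 := by nlinarith [sq_abs n]
    exact_mod_cast h2
  have hc₁ : 0 < 1 + (n:ℝ)^2*(2*Real.log 2 - 1) := by nlinarith [sq_nonneg ((n:ℝ))]
  have hκd : 0 < α⁻¹ - κ := sub_pos.mpr hκ2
  have hαi : 0 < α⁻¹ := inv_pos.mpr hα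
  set a := R/2 with ha_def
  have ha : 0 < a := by rw [ha_def]; linarith
  have h2a : 2*a = R := by rw [ha_def]; ring
  have hr9 : besselR0^2 ≤ 9 := by
    nlinarith [S12.besselR0_le_three, S12.besselR0_nonneg]
  have hR2 : 6*(1+(n:ℝ)^2*(2*Real.log 2 - 1))/(α⁻¹-κ) < R^2 := by
    have hnn : 0 ≤ 6*(1+(n:ℝ)^2*(2*Real.log 2 - 1))/(α⁻¹-κ) := by positivity
    nlinarith [Real.sq_sqrt hnn,
      Real.sqrt_nonneg (6*(1+(n:ℝ)^2*(2*Real.log 2 - 1))/(α⁻¹-κ)), hR]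
  have main : ∀ b > (0 : ℝ), ∃ t₀ > (0 : ℝ),
      gammaK α n κ R (fun r => t₀ * tent (R / 2) b r) = 0 := by
    intro b hb
    set A' := b^2*(1+(n:ℝ)^2*(2*Real.log 2 - 1)) - (α⁻¹-κ)*b^2*a^2*(2/3) with hA'
    set Mf : ℝ → ℝ := fun t => ∫ r in Ioo 0 (2*a),
      r * (t * tent a b r)^2 / (1 + α * (t * tent a b r)^2) with hMf
    have hdecomp : ∀ t, gammaK α n κ R (fun r => t * tent (R / 2) b r)
        = t^2 * A' + α⁻¹ * Mf t := by
      intro t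
      rw [← ha_def, ← h2a]
      exact S12.gamma_decomp α hα ha b n κ t
    have haR : a^2 = R^2/4 := by rw [ha_def]; ring
    set X := α⁻¹ * (b^2*a^2*(2/3)) with hX
    set D := b^4*a^2*(2/3) with hDdef
    have hXpos : 0 < X := by rw [hX]; positivity
    have hDpos : 0 < D := by rw [hDdef]; positivity
    have hLpos : 0 < A' + X := by
      rw [hX, hA', haR]
      have h1 : -(besselR0 ^ 2 + (n : ℝ) ^ 2) < κ * (2 * R ^ 2) := by
        have := (div_lt_iff₀ (by positivity : (0:ℝ) < 2*R^2)).mp hκ1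
        linarith
      have key : 0 < 1 + (n:ℝ)^2*(2*Real.log 2 - 1) + κ*R^2/6 := by
        nlinarith [hr9, hn1, hln2]
      have hαinv : α⁻¹*α = 1 := inv_mul_cancel₀ (ne_of_gt hα)
      nlinarith [mul_pos (mul_pos hb hb) key]
    have hA'neg : A' < 0 := by
      rw [hA', haR]
      have h6 : 6*(1+(n:ℝ)^2*(2*Real.log 2 - 1)) < (α⁻¹-κ)*R^2 := by
        have := (div_lt_iff₀ hκd).mp hR2
        linarith
      nlinarith [mul_pos hb hb]
    have hnegA : 0 < -A' := neg_pos.mpr hA'neg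
    have hMle : ∀ t, Mf t ≤ 2*a^2*α⁻¹ := fun t => S12.M_le_const hα ha t
    have hMge : ∀ t, t^2*b^2*a^2*(2/3)*(1-α*t^2*b^2) ≤ Mf t := fun t => S12.M_ge hα ha hb t
    have hg_lb : ∀ t, t^2*A' + t^2*X - t^4*D ≤ t^2 * A' + α⁻¹ * Mf t := by
      intro t
      have h := mul_le_mul_of_nonneg_left (hMge t) hαi.le
      have hinv : α⁻¹*α = 1 := inv_mul_cancel₀ (ne_of_gt hα)
      have hx : α⁻¹ * (t^2*b^2*a^2*(2/3)*(1-α*t^2*b^2)) = t^2*X - t^4*D := by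
        rw [hX, hDdef]
        linear_combination (-(t^4*b^4*a^2*(2/3))) * hinv
      linarith [h, hx]
    set t1 := Real.sqrt ((A'+X)/(2*D)) with ht1
    have ht1pos : 0 < t1 := Real.sqrt_pos.mpr (by positivity)
    have ht1sq : t1^2 = (A'+X)/(2*D) := Real.sq_sqrt (by positivity)
    have hquad : t1^2*(2*D) = A'+X := by
      rw [ht1sq, div_mul_cancel₀ _ (by positivity : (2*D : ℝ) ≠ 0)]
    have hcont : Continuous (fun t => t^2 * A' + α⁻¹ * Mf t) :=
      ((continuous_pow 2).mul continuous_const).add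
        (continuous_const.mul (S12.M_continuous hα a b))
    clear_value A' X D Mf t1
    have hg1 : 0 < t1^2 * A' + α⁻¹ * Mf t1 := by
      have hlb := hg_lb t1
      have ht1sq' : 0 < t1^2 := pow_pos ht1pos 2
      have hhalf : t1^2*D = (A'+X)/2 := by linear_combination hquad/2
      have h4 : t1^4*D = t1^2*((A'+X)/2) := by rw [← hhalf]; ring
      linarith [mul_pos ht1sq' hLpos, hlb, h4]
    set C2 := 2*a^2*α⁻¹*α⁻¹ with hC2
    have hC2pos : 0 < C2 := by rw [hC2]; positivity
    set t2 := Real.sqrt ((C2+1)/(-A')) with ht2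
    have ht2pos : 0 < t2 := Real.sqrt_pos.mpr (div_pos (by linarith) hnegA)
    have ht2sq : t2^2 = (C2+1)/(-A') := Real.sq_sqrt (le_of_lt (div_pos (by linarith) hnegA))
    have hquad2 : t2^2*(-A') = C2+1 := by
      rw [ht2sq, div_mul_cancel₀ _ (ne_of_gt hnegA)]
    clear_value t2 C2
    have hg2 : t2^2 * A' + α⁻¹ * Mf t2 < 0 := by
      have h := mul_le_mul_of_nonneg_left (hMle t2) hαi.le
      have h' : t2^2*A' = -(C2+1) := by linear_combination -hquad2
      have hC2' : α⁻¹*(2*a^2*α⁻¹) = C2 := by rw [hC2]; ring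
      linarith [h, h', hC2']
    rcases le_total t1 t2 with hle|hle
    · obtain ⟨t₀, ht₀m, ht₀v⟩ := intermediate_value_Icc' hle hcont.continuousOn
        ⟨hg2.le, hg1.le⟩
      refine ⟨t₀, lt_of_lt_of_le ht1pos ht₀m.1, ?_⟩
      rw [hdecomp t₀]
      exact ht₀v
    · obtain ⟨t₀, ht₀m, ht₀v⟩ := intermediate_value_Icc hle hcont.continuousOn
        ⟨hg2.le, hg1.le⟩
      refine ⟨t₀, lt_of_lt_of_le ht2pos ht₀m.1, ?_⟩
      rw [hdecomp t₀]
      exact ht₀v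
  refine ⟨main, ?_⟩
  obtain ⟨t₀, ht₀, hgam⟩ := main 1 one_pos
  have ha' : a ≠ 0 := ne_of_gt ha
  have haR' : a < R := by rw [ha_def]; linarith
  refine ⟨fun r => t₀ * tent (R/2) 1 r, ⟨?_, ?_, ?_, ?_, ?_⟩, ⟨R/2, ⟨by linarith, by linarith⟩, ?_⟩, hgam⟩
  · exact (continuous_const.mul (S12.tent_continuous (R/2) 1)).continuousOn
  · refine ⟨{(R/2 : ℝ)}, ?_⟩
    intro x hx
    have hx1 : x ∈ Ioo (0:ℝ) R := hx.1
    have hx2 : x ≠ R/2 := by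
      intro h
      exact hx.2 (by simp [h])
    rcases lt_or_gt_of_ne hx2 with h|h
    · have he : (fun r => t₀ * tent (R/2) 1 r) =ᶠ[nhds x] (fun r => t₀ * ((1/(R/2)) * r)) := by
        filter_upwards [Iio_mem_nhds h] with y hy
        rw [S12.tent_left 1 (le_of_lt hy)]
      have hc : ContDiffAt ℝ 1 (fun r : ℝ => t₀ * ((1/(R/2)) * r)) x := by
        apply ContDiff.contDiffAt
        fun_prop
      exact (hc.congr_of_eventuallyEq he).contDiffWithinAt
    · have he : (fun r => t₀ * tent (R/2) 1 r) =ᶠ[nhds x]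
          (fun r => t₀ * ((1/(R/2)) * (2*(R/2) - r))) := by
        filter_upwards [Ioi_mem_nhds h] with y hy
        rw [S12.tent_right 1 hy]
      have hc : ContDiffAt ℝ 1 (fun r : ℝ => t₀ * ((1/(R/2)) * (2*(R/2) - r))) x := by
        apply ContDiff.contDiffAt
        fun_prop
      exact (hc.congr_of_eventuallyEq he).contDiffWithinAt
  · simp [S12.tent_left 1 (show (0:ℝ) ≤ R/2 by linarith)]
  · have : tent (R/2) 1 R = 0 := by
      rw [S12.tent_right 1 (by linarith : R/2 < R)]
      ring_nf
    simp [this]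
  · have hseq : EqOn (fun r => r * (deriv (fun r => t₀ * tent (R/2) 1 r) r)^2
        + ((fun r => t₀ * tent (R/2) 1 r) r)^2/r)
        (fun r => (t₀*(1/(R/2)))^2 * (r + r)) (Ioo 0 (R/2)) := by
      intro r hr
      simp only
      rw [S12.deriv_scaled_left 1 t₀ hr.2, S12.tent_left 1 hr.2.le]
      have hr0 : r ≠ 0 := ne_of_gt hr.1
      field_simp
    have hseq2 : EqOn (fun r => r * (deriv (fun r => t₀ * tent (R/2) 1 r) r)^2
        + ((fun r => t₀ * tent (R/2) 1 r) r)^2/r)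
        (fun r => (t₀*(1/(R/2)))^2 * (r + (2*(R/2) - r)^2 * r⁻¹)) (Ioo (R/2) R) := by
      intro r hr
      simp only
      rw [S12.deriv_scaled_right 1 t₀ hr.1, S12.tent_right 1 hr.1]
      have hr0 : r ≠ 0 := ne_of_gt (lt_trans ha hr.1)
      field_simp
    have hii1 : IntervalIntegrable (fun r : ℝ => (t₀*(1/(R/2)))^2 * (r + r)) volume 0 (R/2) := by
      apply Continuous.intervalIntegrable
      continuity
    have hii2 : IntervalIntegrable (fun r : ℝ => (t₀*(1/(R/2)))^2 * (r + (2*(R/2) - r)^2 * r⁻¹))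
        volume (R/2) R := by
      apply ContinuousOn.intervalIntegrable
      have h0 : ∀ x ∈ uIcc (R/2) R, x ≠ 0 := by
        intro x hx
        rw [uIcc_of_le (by linarith)] at hx
        exact ne_of_gt (lt_of_lt_of_le ha hx.1)
      apply ContinuousOn.mul continuousOn_const
      apply ContinuousOn.add continuousOn_id
      exact ContinuousOn.mul (by fun_prop) (ContinuousOn.inv₀ continuousOn_id h0)
    exact S12.integrableOn_split (le_of_lt ha) (le_of_lt haR') hseq hseq2 hii1 hii2
  · have : tent (R/2) 1 (R/2) = 1 := by
      rw [S12.tent_left 1 (le_refl _)]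
      field_simp
    simp only [this, mul_one]
    exact ne_of_gt ht₀
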